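/- Suppose D^k are positive diagonal and B^k are nonnegative irreducible matrices for k = 1, 2, and (D²)⁻¹B² > (D¹)⁻¹B¹ (entrywise ≥ with at least one strict inequality). Then there exists no pair of vectors x̄¹, x̄² with 0 ≪ x̄¹, x̄² ≪ 1 and x̄¹ + x̄² ≪ 1 satisfying simultaneously 0 = (−D¹ + (I − X̄¹ − X̄²)B¹)x̄¹ and 0 = (−D² + (I − X̄¹ − X̄²)B²)x̄². -/
import Mathlib


open Matrix Finset

/-- A nonnegative matrix is irreducible if for every `(i, j)` some power has a
strictly positive `(i, j)` entry. -/
def IrredNonneg {n : ℕ} (B : Matrix (Fin n) (Fin n) ℝ) : Prop :=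
  (∀ i j, 0 ≤ B i j) ∧ ∀ i j, ∃ k : ℕ, 0 < (B ^ (k + 1)) i j

/-- `A > B` entrywise: `A ≥ B` with at least one strict inequality. -/
def MatGt {n : ℕ} (A B : Matrix (Fin n) (Fin n) ℝ) : Prop :=
  (∀ i j, B i j ≤ A i j) ∧ A ≠ B

lemma pow_entry_nonneg {n : ℕ} (B : Matrix (Fin n) (Fin n) ℝ)
    (hB : ∀ i j, 0 ≤ B i j) : ∀ k i j, 0 ≤ (B ^ k) i j := by
  intro k
  induction k with
  | zero =>
    intro i j
    simp only [pow_zero, Matrix.one_apply]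
    split <;> norm_num
  | succ k ih =>
    intro i j
    rw [pow_succ, Matrix.mul_apply]
    exact Finset.sum_nonneg fun m _ => mul_nonneg (ih i m) (hB m j)

/-- If `(D²)⁻¹B² > (D¹)⁻¹B¹` entrywise, there is no coexistence equilibrium
`(x̄¹, x̄²)` with `0 ≪ x̄¹, x̄² ≪ 1` and `x̄¹ + x̄² ≪ 1`. -/
theorem stmt9 (n : ℕ) (d1 d2 : Fin n → ℝ) (hd1 : ∀ i, 0 < d1 i)
    (hd2 : ∀ i, 0 < d2 i)
    (B1 B2 : Matrix (Fin n) (Fin n) ℝ)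
    (hB1 : IrredNonneg B1) (hB2 : IrredNonneg B2)
    (hlt : MatGt ((Matrix.diagonal d2)⁻¹ * B2) ((Matrix.diagonal d1)⁻¹ * B1)) :
    ¬ ∃ x1 x2 : Fin n → ℝ,
      (∀ i, 0 < x1 i ∧ x1 i < 1) ∧ (∀ i, 0 < x2 i ∧ x2 i < 1) ∧
      (∀ i, x1 i + x2 i < 1) ∧
      (-(Matrix.diagonal d1) +
        ((1 : Matrix (Fin n) (Fin n) ℝ) - Matrix.diagonal x1
          - Matrix.diagonal x2) * B1) *ᵥ x1 = 0 ∧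
      (-(Matrix.diagonal d2) +
        ((1 : Matrix (Fin n) (Fin n) ℝ) - Matrix.diagonal x1
          - Matrix.diagonal x2) * B2) *ᵥ x2 = 0 := by
  rintro ⟨x1, x2, hx1, hx2, hsum, heq1, heq2⟩
  set c : Fin n → ℝ := fun i => 1 - x1 i - x2 i with hcdef
  have hcpos : ∀ i, 0 < c i := fun i => by
    have := hsum i; simp only [hcdef]; linarith
  -- inverse of a positive diagonal matrix
  have hinv : ∀ (d : Fin n → ℝ), (∀ i, 0 < d i) →
      (Matrix.diagonal d)⁻¹ = Matrix.diagonal (fun i => (d i)⁻¹) := by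
    intro d hd
    apply Matrix.inv_eq_right_inv
    rw [Matrix.diagonal_mul_diagonal]
    rw [show (fun i => d i * (d i)⁻¹) = fun _ => (1 : ℝ) from
      funext fun i => mul_inv_cancel₀ (hd i).ne', Matrix.diagonal_one]
  -- entrywise comparison
  have hle : ∀ i j, (d1 i)⁻¹ * B1 i j ≤ (d2 i)⁻¹ * B2 i j := by
    intro i j
    have := hlt.1 i j
    rwa [hinv d1 hd1, hinv d2 hd2, Matrix.diagonal_mul, Matrix.diagonal_mul] at this
  have hstrict : ∃ i j, (d1 i)⁻¹ * B1 i j < (d2 i)⁻¹ * B2 i j := by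
    by_contra h
    push_neg at h
    apply hlt.2
    ext i j
    rw [hinv d1 hd1, hinv d2 hd2, Matrix.diagonal_mul, Matrix.diagonal_mul]
    exact le_antisymm (h i j) (hle i j)
  obtain ⟨iS, jS, hSlt⟩ := hstrict
  -- the matrix C := 1 - X1 - X2 is diagonal c
  have hC : (1 : Matrix (Fin n) (Fin n) ℝ) - Matrix.diagonal x1 - Matrix.diagonal x2
      = Matrix.diagonal c := by
    rw [← Matrix.diagonal_one, ← Matrix.diagonal_sub, ← Matrix.diagonal_sub]
  -- scalar form of the equilibrium equations
  have key : ∀ (d : Fin n → ℝ) (B : Matrix (Fin n) (Fin n) ℝ) (x : Fin n → ℝ),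
      (∀ i, 0 < d i) →
      (-(Matrix.diagonal d) +
        ((1 : Matrix (Fin n) (Fin n) ℝ) - Matrix.diagonal x1
          - Matrix.diagonal x2) * B) *ᵥ x = 0 →
      ∀ i, x i = ∑ j, c i * (d i)⁻¹ * B i j * x j := by
    intro d B x hd heq i
    have h := congrFun heq i
    rw [hC, Matrix.add_mulVec, Matrix.neg_mulVec, ← Matrix.mulVec_mulVec] at h
    simp only [Pi.add_apply, Pi.neg_apply, Pi.zero_apply,
      Matrix.mulVec_diagonal] at h
    have hx : x i = c i * (d i)⁻¹ * (B *ᵥ x) i := by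
      have hdne : d i ≠ 0 := (hd i).ne'
      have h2 : d i * x i = c i * (B *ᵥ x) i := by linarith
      field_simp
      try linarith [h2]
    rw [hx]
    rw [show (B *ᵥ x) i = ∑ j, B i j * x j from rfl]
    rw [Finset.mul_sum]
    exact Finset.sum_congr rfl fun j _ => by ring
  have E1 := key d1 B1 x1 hd1 heq1
  have E2 := key d2 B2 x2 hd2 heq2
  -- minimizer of x2 / x1
  obtain ⟨i0, -, hmin⟩ := Finset.exists_min_image Finset.univ
    (fun j => x2 j / x1 j) ⟨iS, Finset.mem_univ iS⟩
  set t : ℝ := x2 i0 / x1 i0 with htdef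
  have htpos : 0 < t := div_pos (hx2 i0).1 (hx1 i0).1
  have hge : ∀ j, t * x1 j ≤ x2 j := by
    intro j
    have := hmin j (Finset.mem_univ j)
    exact (le_div_iff₀ (hx1 j).1).mp this
  -- P i : the minimum ratio is attained at i
  set P : Fin n → Prop := fun i => x2 i = t * x1 i with hPdef
  have hPi0 : P i0 := by
    simp only [hPdef, htdef]
    rw [div_mul_cancel₀ _ (hx1 i0).1.ne']
  -- key step: equality at i propagates along positive entries of B2 and
  -- forces row equality
  have step : ∀ i, P i →
      (∀ j, 0 < B2 i j → P j) ∧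
      (∀ j, c i * (d2 i)⁻¹ * B2 i j = c i * (d1 i)⁻¹ * B1 i j) := by
    intro i hPi
    have ha2nn : ∀ j, 0 ≤ c i * (d2 i)⁻¹ * B2 i j := fun j =>
      mul_nonneg (mul_nonneg (hcpos i).le (inv_nonneg.mpr (hd2 i).le)) (hB2.1 i j)
    have l1 : ∀ j ∈ Finset.univ, c i * (d1 i)⁻¹ * B1 i j * (t * x1 j)
        ≤ c i * (d2 i)⁻¹ * B2 i j * (t * x1 j) := by
      intro j _
      have h1 : c i * (d1 i)⁻¹ * B1 i j ≤ c i * (d2 i)⁻¹ * B2 i j := by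
        have := hle i j
        have hc := (hcpos i).le
        calc c i * (d1 i)⁻¹ * B1 i j = c i * ((d1 i)⁻¹ * B1 i j) := by ring
          _ ≤ c i * ((d2 i)⁻¹ * B2 i j) := mul_le_mul_of_nonneg_left this hc
          _ = c i * (d2 i)⁻¹ * B2 i j := by ring
      exact mul_le_mul_of_nonneg_right h1
        (mul_nonneg htpos.le (hx1 j).1.le)
    have l2 : ∀ j ∈ Finset.univ, c i * (d2 i)⁻¹ * B2 i j * (t * x1 j)
        ≤ c i * (d2 i)⁻¹ * B2 i j * x2 j := fun j _ =>
      mul_le_mul_of_nonneg_left (hge j) (ha2nn j)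
    have sum1 : ∑ j, c i * (d1 i)⁻¹ * B1 i j * (t * x1 j) = t * x1 i := by
      rw [show t * x1 i = t * ∑ j, c i * (d1 i)⁻¹ * B1 i j * x1 j from by
        rw [← E1 i], Finset.mul_sum]
      exact Finset.sum_congr rfl fun j _ => by ring
    have sum3 : ∑ j, c i * (d2 i)⁻¹ * B2 i j * x2 j = t * x1 i := by
      rw [← E2 i, hPi]
    -- chain of inequalities collapses
    have ineq1 := Finset.sum_le_sum l1
    have ineq2 := Finset.sum_le_sum l2
    have eqsum2 : ∑ j, c i * (d2 i)⁻¹ * B2 i j * (t * x1 j) = t * x1 i := by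
      rw [sum1] at ineq1
      rw [sum3] at ineq2
      linarith
    have eqA : ∀ j ∈ Finset.univ,
        c i * (d2 i)⁻¹ * B2 i j * (t * x1 j) = c i * (d2 i)⁻¹ * B2 i j * x2 j :=
      (Finset.sum_eq_sum_iff_of_le l2).mp (by rw [sum3, eqsum2])
    have eqB : ∀ j ∈ Finset.univ,
        c i * (d1 i)⁻¹ * B1 i j * (t * x1 j)
          = c i * (d2 i)⁻¹ * B2 i j * (t * x1 j) :=
      (Finset.sum_eq_sum_iff_of_le l1).mp (by rw [sum1, eqsum2])
    constructor
    · intro j hBj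
      have ha2pos : 0 < c i * (d2 i)⁻¹ * B2 i j :=
        mul_pos (mul_pos (hcpos i) (inv_pos.mpr (hd2 i))) hBj
      have := (eqA j (Finset.mem_univ j)).symm
      exact mul_left_cancel₀ ha2pos.ne' this
    · intro j
      have hx1pos : (0 : ℝ) < t * x1 j := mul_pos htpos (hx1 j).1
      exact mul_right_cancel₀ hx1pos.ne' (eqB j (Finset.mem_univ j)).symm
  -- propagate along powers of B2
  have claim : ∀ k i j, P i → 0 < (B2 ^ (k + 1)) i j → P j := by
    intro k
    induction k with
    | zero =>
      intro i j hPi hpos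
      rw [pow_one] at hpos
      exact (step i hPi).1 j hpos
    | succ k ih =>
      intro i j hPi hpos
      rw [pow_succ, Matrix.mul_apply] at hpos
      have : ∃ m, 0 < (B2 ^ (k + 1)) i m ∧ 0 < B2 m j := by
        by_contra h
        push_neg at h
        have : ∀ m ∈ Finset.univ, (B2 ^ (k + 1)) i m * B2 m j ≤ 0 := by
          intro m _
          rcases lt_or_eq_of_le (pow_entry_nonneg B2 hB2.1 (k + 1) i m) with hm | hm
          · have := h m hm
            exact mul_nonpos_of_nonneg_of_nonpos
              (pow_entry_nonneg B2 hB2.1 (k + 1) i m) this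
          · rw [← hm, zero_mul]
        have := Finset.sum_nonpos this
        linarith
      obtain ⟨m, hm1, hm2⟩ := this
      exact (step m (ih i m hPi hm1)).1 j hm2
  -- reach the site of the strict inequality
  obtain ⟨k, hk⟩ := hB2.2 i0 iS
  have hPS : P iS := claim k i0 iS hPi0 hk
  have hrow := (step iS hPS).2 jS
  have : (d2 iS)⁻¹ * B2 iS jS = (d1 iS)⁻¹ * B1 iS jS := by
    have h1 : c iS * ((d2 iS)⁻¹ * B2 iS jS) = c iS * ((d1 iS)⁻¹ * B1 iS jS) := by
      calc c iS * ((d2 iS)⁻¹ * B2 iS jS) = c iS * (d2 iS)⁻¹ * B2 iS jS := by ring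
        _ = c iS * (d1 iS)⁻¹ * B1 iS jS := hrow
        _ = c iS * ((d1 iS)⁻¹ * B1 iS jS) := by ring
    exact mul_left_cancel₀ (hcpos iS).ne' h1
  linarith
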